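/- arXiv:2001.00165 — 7 statements merged into one kernel-verified Lean document; each statement's English description precedes it below -/
import Mathlib

section
/- Let k be a field of characteristic 2 and let a₁, a₂, a₃, a₄, a₅, a₆ ∈ k with a₁ ≠ 0. Then the element f = x² + a₁xyz + a₂xy² + a₃y³z + a₄y²z² + a₅yz³ + a₆z⁴ does not lie in the ideal (x², y², z²) of the formal power series ring k[[x,y,z]]. -/
open MvPowerSeries

theorem stmt_0 {k : Type*} [Field k] [CharP k 2]
    (a₁ a₂ a₃ a₄ a₅ a₆ : k) (ha₁ : a₁ ≠ 0) :
    (X 0 ^ 2 + C (σ := Fin 3) (R := k) a₁ * X 0 * X 1 * X 2 + C (σ := Fin 3) (R := k) a₂ * X 0 * X 1 ^ 2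
        + C (σ := Fin 3) (R := k) a₃ * X 1 ^ 3 * X 2 + C (σ := Fin 3) (R := k) a₄ * X 1 ^ 2 * X 2 ^ 2
        + C (σ := Fin 3) (R := k) a₅ * X 1 * X 2 ^ 3 + C (σ := Fin 3) (R := k) a₆ * X 2 ^ 4 :
      MvPowerSeries (Fin 3) k)
      ∉ Ideal.span ({X 0 ^ 2, X 1 ^ 2, X 2 ^ 2} : Set (MvPowerSeries (Fin 3) k)) := by
  classical
  intro hmem
  set d : Fin 3 →₀ ℕ := Finsupp.single 0 1 + Finsupp.single 1 1 + Finsupp.single 2 1 with hd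
  have hd0 : d 0 = 1 := by simp [hd, Finsupp.single_apply]
  have hd1 : d 1 = 1 := by simp [hd, Finsupp.single_apply]
  have hd2 : d 2 = 1 := by simp [hd, Finsupp.single_apply]
  -- coefficient at d of any element of the ideal is 0
  have hzero : (coeff d) ((X 0 ^ 2 + C (σ := Fin 3) (R := k) a₁ * X 0 * X 1 * X 2 + C (σ := Fin 3) (R := k) a₂ * X 0 * X 1 ^ 2
        + C (σ := Fin 3) (R := k) a₃ * X 1 ^ 3 * X 2 + C (σ := Fin 3) (R := k) a₄ * X 1 ^ 2 * X 2 ^ 2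
        + C (σ := Fin 3) (R := k) a₅ * X 1 * X 2 ^ 3 + C (σ := Fin 3) (R := k) a₆ * X 2 ^ 4 :
      MvPowerSeries (Fin 3) k)) = 0 := by
    rw [show ({X 0 ^ 2, X 1 ^ 2, X 2 ^ 2} : Set (MvPowerSeries (Fin 3) k))
        = insert (X 0 ^ 2) (insert (X 1 ^ 2) {X 2 ^ 2}) from rfl] at hmem
    rw [Ideal.mem_span_insert] at hmem
    obtain ⟨a, w, hw, heq⟩ := hmem
    rw [Ideal.mem_span_insert] at hw
    obtain ⟨b, w2, hw2, rfl⟩ := hw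
    rw [Ideal.mem_span_singleton] at hw2
    rw [heq, map_add, map_add]
    have h0 : (coeff d) (a * X 0 ^ 2) = 0 :=
      X_pow_dvd_iff.mp (dvd_mul_left _ _) d (by rw [hd0]; norm_num)
    have h1 : (coeff d) (b * X 1 ^ 2) = 0 :=
      X_pow_dvd_iff.mp (dvd_mul_left _ _) d (by rw [hd1]; norm_num)
    have h2 : (coeff d) w2 = 0 :=
      X_pow_dvd_iff.mp hw2 d (by rw [hd2]; norm_num)
    rw [h0, h1, h2]; ring
  -- but the coefficient at d is a₁
  have hcoeff : (coeff d) ((X 0 ^ 2 + C (σ := Fin 3) (R := k) a₁ * X 0 * X 1 * X 2 + C (σ := Fin 3) (R := k) a₂ * X 0 * X 1 ^ 2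
        + C (σ := Fin 3) (R := k) a₃ * X 1 ^ 3 * X 2 + C (σ := Fin 3) (R := k) a₄ * X 1 ^ 2 * X 2 ^ 2
        + C (σ := Fin 3) (R := k) a₅ * X 1 * X 2 ^ 3 + C (σ := Fin 3) (R := k) a₆ * X 2 ^ 4 :
      MvPowerSeries (Fin 3) k)) = a₁ := by
    have hX : ∀ i : Fin 3, (X i : MvPowerSeries (Fin 3) k) = monomial (Finsupp.single i 1) 1 :=
      fun i => X_def i
    simp only [hX, ← monomial_zero_eq_C_apply, pow_succ, pow_zero, one_mul, mul_one,
      mul_assoc, monomial_mul_monomial, map_add, coeff_monomial]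
    simp [hd, Finsupp.ext_iff, Fin.forall_fin_succ, Finsupp.single_apply, Fin.succ_zero_eq_one, Fin.succ_one_eq_two]
  rw [hcoeff] at hzero
  exact ha₁ hzero
end

section
/- Let k be a field of characteristic 2 and let a₁, a₂, a₃, a₄, a₅ ∈ k with a₁ ≠ 0. Then the element f = x² + y³ + a₁xyz + a₂xz³ + a₃z⁶ + a₄yz⁴ + a₅y²z² does not lie in the ideal (x², y², z²) of the formal power series ring k[[x,y,z]]. -/
open MvPowerSeries Finsupp

theorem stmt_1 {k : Type*} [Field k] [CharP k 2]
    (a₁ a₂ a₃ a₄ a₅ : k) (ha₁ : a₁ ≠ 0) :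
    (X 0 ^ 2 + X 1 ^ 3 + C a₁ * X 0 * X 1 * X 2
        + C a₂ * X 0 * X 2 ^ 3 + C a₃ * X 2 ^ 6
        + C a₄ * X 1 * X 2 ^ 4 + C a₅ * X 1 ^ 2 * X 2 ^ 2 :
      MvPowerSeries (Fin 3) k)
      ∉ Ideal.span ({X 0 ^ 2, X 1 ^ 2, X 2 ^ 2} : Set (MvPowerSeries (Fin 3) k)) := by
  intro h
  rw [Ideal.mem_span_insert] at h
  obtain ⟨g₁, w, hw, hf⟩ := h
  rw [Ideal.mem_span_pair] at hw
  obtain ⟨g₂, g₃, rfl⟩ := hw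
  set m : Fin 3 →₀ ℕ := single 0 1 + single 1 1 + single 2 1 with hm
  have hX : ∀ s : Fin 3, (X s : MvPowerSeries (Fin 3) k) = monomial (single s 1) 1 :=
    fun s => rfl
  have hC : ∀ a : k, (C a : MvPowerSeries (Fin 3) k) = monomial 0 a :=
    fun a => rfl
  have hmle : ∀ j : Fin 3, m j ≤ 1 := by
    intro j; fin_cases j <;> simp [hm]
  have hle : ∀ s : Fin 3, ¬ (single s 2 ≤ m) := by
    intro s h
    have h0 := h s
    rw [single_eq_same] at h0
    exact absurd (le_trans h0 (hmle s)) (by norm_num)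
  have hm0 : m 0 = 1 := by simp [hm, single_apply]
  have hm1 : m 1 = 1 := by simp [hm, single_apply]
  have A1 : coeff m (X 0 ^ 2 : MvPowerSeries (Fin 3) k) = 0 := by
    rw [X_pow_eq, coeff_monomial, if_neg]
    intro h
    have := DFunLike.congr_fun h 1
    rw [hm1, single_apply] at this
    simp at this
  have A2 : coeff m (X 1 ^ 3 : MvPowerSeries (Fin 3) k) = 0 := by
    rw [X_pow_eq, coeff_monomial, if_neg]
    intro h
    have := DFunLike.congr_fun h 0
    rw [hm0, single_apply] at this
    simp at this
  have A3 : coeff m (C a₁ * X 0 * X 1 * X 2) = a₁ := by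
    rw [hC, hX 0, hX 1, hX 2, monomial_mul_monomial, monomial_mul_monomial,
      monomial_mul_monomial, zero_add, mul_one, mul_one, mul_one, coeff_monomial, if_pos rfl]
  have A4 : coeff m (C a₂ * X 0 * X 2 ^ 3) = 0 := by
    rw [hC, hX 0, X_pow_eq, monomial_mul_monomial, monomial_mul_monomial, zero_add,
      coeff_monomial, if_neg]
    intro h
    have := DFunLike.congr_fun h 1
    rw [hm1, Finsupp.add_apply, single_apply, single_apply] at this
    simp at this
  have A5 : coeff m (C a₃ * X 2 ^ 6) = 0 := by
    rw [hC, X_pow_eq, monomial_mul_monomial, zero_add, coeff_monomial, if_neg]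
    intro h
    have := DFunLike.congr_fun h 0
    rw [hm0, single_apply] at this
    simp at this
  have A6 : coeff m (C a₄ * X 1 * X 2 ^ 4) = 0 := by
    rw [hC, hX 1, X_pow_eq, monomial_mul_monomial, monomial_mul_monomial, zero_add,
      coeff_monomial, if_neg]
    intro h
    have := DFunLike.congr_fun h 0
    rw [hm0, Finsupp.add_apply, single_apply, single_apply] at this
    simp at this
  have A7 : coeff m (C a₅ * X 1 ^ 2 * X 2 ^ 2) = 0 := by
    rw [hC, X_pow_eq, X_pow_eq, monomial_mul_monomial, monomial_mul_monomial, zero_add,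
      coeff_monomial, if_neg]
    intro h
    have := DFunLike.congr_fun h 0
    rw [hm0, Finsupp.add_apply, single_apply, single_apply] at this
    simp at this
  have B : ∀ (g : MvPowerSeries (Fin 3) k) (i : Fin 3), coeff m (g * X i ^ 2) = 0 := by
    intro g i
    rw [X_pow_eq, coeff_mul_monomial, if_neg (hle i)]
  have hcoe := congrArg (coeff m) hf
  simp only [map_add] at hcoe
  rw [A1, A2, A3, A4, A5, A6, A7, B g₁ 0, B g₂ 1, B g₃ 2] at hcoe
  simp at hcoe
  exact ha₁ hcoe
end

section
/- Let p be an odd prime and k a field of characteristic p. Then (x² + y²z²)^{p−1} does not lie in the ideal (x^p, y^p, z^p) of the formal power series ring k[[x,y,z]]. (The monomial x^{p−1}y^{p−1}z^{p−1} occurs in the expansion with coefficient equal to the binomial coefficient C(p−1,(p−1)/2), which is nonzero modulo p.) -/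
open MvPowerSeries Finsupp

theorem stmt_2 (p : ℕ) (hp : p.Prime) (hodd : Odd p)
    {k : Type*} [Field k] [CharP k p] :
    ((X 0 ^ 2 + X 1 ^ 2 * X 2 ^ 2 : MvPowerSeries (Fin 3) k) ^ (p - 1))
      ∉ Ideal.span ({X 0 ^ p, X 1 ^ p, X 2 ^ p} : Set (MvPowerSeries (Fin 3) k)) := by
  classical
  intro hmem
  set n := p - 1 with hn
  set m := n / 2 with hm
  have hp2 : 2 ≤ p := hp.two_le
  have hneven : n = 2 * m := by
    obtain ⟨t, ht⟩ := hodd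
    omega
  have hnm : n - m = m := by omega
  set e : Fin 3 →₀ ℕ := single 0 n + single 1 n + single 2 n with he
  have he0 : e 0 = n := by simp [he, Finsupp.single_apply]
  have he1 : e 1 = n := by simp [he, Finsupp.single_apply]
  have he2 : e 2 = n := by simp [he, Finsupp.single_apply]
  -- coefficient of e in any multiple of X i ^ p is zero
  have key : ∀ (i : Fin 3) (a : MvPowerSeries (Fin 3) k), e i = n →
      coeff e (a * X i ^ p) = 0 := by
    intro i a hei
    rw [X_pow_eq, coeff_mul_monomial, if_neg]
    intro hle
    have := hle i
    simp [Finsupp.single_apply, hei] at this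
    omega
  -- the coefficient of e in the big power is zero, by span membership
  have hcoeff0 : coeff e ((X 0 ^ 2 + X 1 ^ 2 * X 2 ^ 2 : MvPowerSeries (Fin 3) k) ^ n) = 0 := by
    rw [Ideal.mem_span_insert] at hmem
    obtain ⟨a, z, hz, heq⟩ := hmem
    rw [Ideal.mem_span_insert] at hz
    obtain ⟨b, w, hw, heq2⟩ := hz
    rw [Ideal.mem_span_singleton] at hw
    obtain ⟨c, rfl⟩ := hw
    rw [heq, heq2]
    simp only [map_add]
    rw [key 0 a he0, key 1 b he1, mul_comm (X (2:Fin 3) ^ p) c, key 2 c he2]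
    ring
  -- compute the coefficient directly
  have hexp : ((X 0 ^ 2 + X 1 ^ 2 * X 2 ^ 2 : MvPowerSeries (Fin 3) k) ^ n) =
      ∑ j ∈ Finset.range (n + 1),
        (monomial (single 0 (2 * j) + (single 1 (2 * (n - j)) + single 2 (2 * (n - j)))) 1)
          * C ((n.choose j : k)) := by
    rw [add_pow]
    refine Finset.sum_congr rfl fun j _ => ?_
    rw [mul_pow, ← pow_mul, ← pow_mul, ← pow_mul, X_pow_eq, X_pow_eq, X_pow_eq,
      monomial_mul_monomial, monomial_mul_monomial, one_mul, one_mul]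
    rw [map_natCast]
  have hcoeff : coeff e ((X 0 ^ 2 + X 1 ^ 2 * X 2 ^ 2 : MvPowerSeries (Fin 3) k) ^ n)
      = (n.choose m : k) := by
    rw [hexp, map_sum]
    rw [Finset.sum_eq_single m]
    · rw [coeff_mul_C, coeff_monomial, if_pos, one_mul]
      rw [he, hnm, ← hneven]
      abel
    · intro j hj hjm
      rw [coeff_mul_C, coeff_monomial, if_neg, zero_mul]
      intro hed
      have := congrArg (fun f : Fin 3 →₀ ℕ => f 0) hed
      simp [he, Finsupp.single_apply] at this
      omega
    · intro hmn
      exfalso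
      exact hmn (Finset.mem_range.mpr (by omega))
  rw [hcoeff] at hcoeff0
  have hdvd : p ∣ n.choose m := (CharP.cast_eq_zero_iff k p _).mp hcoeff0
  have hfac : n.choose m * Nat.factorial m * Nat.factorial (n - m) = Nat.factorial n :=
    Nat.choose_mul_factorial_mul_factorial (by omega)
  have : p ∣ Nat.factorial n := hfac ▸ (Dvd.dvd.mul_right (Dvd.dvd.mul_right hdvd _) _)
  have := (Nat.Prime.dvd_factorial hp).mp this
  omega
end

section
/- Let p be an odd prime and k a field of characteristic p. Then (x² + y²(y − z²))^{p−1} = (x² + y³ − y²z²)^{p−1} does not lie in the ideal (x^p, y^p, z^p) of the formal power series ring k[[x,y,z]]. -/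
open MvPowerSeries

open Finsupp in
/-- Coefficient of a product of powers of the three variables. -/
lemma coeff_X3 {k : Type*} [Field k] (m : Fin 3 →₀ ℕ) (a b c : ℕ) :
    (coeff m) ((X 0 : MvPowerSeries (Fin 3) k) ^ a * X 1 ^ b * X 2 ^ c) =
      if m = single 0 a + single 1 b + single 2 c then 1 else 0 := by
  rw [X_pow_eq, X_pow_eq, X_pow_eq, monomial_mul_monomial, monomial_mul_monomial,
    coeff_monomial]
  simp

open Finsupp in
lemma span_coeff_zero {k : Type*} [Field k] (p : ℕ)
    {g : MvPowerSeries (Fin 3) k}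
    (hg : g ∈ Ideal.span ({X 0 ^ p, X 1 ^ p, X 2 ^ p} : Set (MvPowerSeries (Fin 3) k)))
    (m : Fin 3 →₀ ℕ) (hm : ∀ i, m i < p) : (coeff m) g = 0 := by
  induction hg using Submodule.span_induction generalizing m with
  | mem x hx =>
      simp only [Set.mem_insert_iff, Set.mem_singleton_iff] at hx
      have key : ∀ i : Fin 3, (coeff m) ((X i : MvPowerSeries (Fin 3) k) ^ p) = 0 := by
        intro i
        rw [X_pow_eq, coeff_monomial, if_neg]
        intro h
        have := DFunLike.congr_fun h i
        simp [Finsupp.single_apply] at this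
        exact absurd (this ▸ hm i) (lt_irrefl p)
      rcases hx with h | h | h <;> subst h <;> exact key _
  | zero => simp
  | add x y hx hy ihx ihy => simp [ihx m hm, ihy m hm]
  | smul a x hx ih =>
      rw [smul_eq_mul, coeff_mul]
      refine Finset.sum_eq_zero fun v hv => ?_
      rw [Finset.HasAntidiagonal.mem_antidiagonal] at hv
      rw [ih v.2 fun i => ?_, mul_zero]
      calc v.2 i ≤ v.1 i + v.2 i := Nat.le_add_left _ _
        _ = m i := by rw [← hv]; rfl
        _ < p := hm i

theorem stmt_3 (p : ℕ) (hp : p.Prime) (hodd : Odd p)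
    {k : Type*} [Field k] [CharP k p] :
    ((X 0 ^ 2 + X 1 ^ 2 * (X 1 - X 2 ^ 2) : MvPowerSeries (Fin 3) k) ^ (p - 1))
      ∉ Ideal.span ({X 0 ^ p, X 1 ^ p, X 2 ^ p} : Set (MvPowerSeries (Fin 3) k)) := by
  obtain ⟨q, hq⟩ := hodd
  have hp2 : 2 ≤ p := hp.two_le
  set n := p - 1 with hn
  have hn2q : n = 2 * q := by omega
  have hq1 : 1 ≤ q := by omega
  set m : Fin 3 →₀ ℕ :=
    Finsupp.single 0 n + Finsupp.single 1 n + Finsupp.single 2 n with hm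
  have hmi : ∀ i : Fin 3, m i = n := by
    intro i
    fin_cases i <;> simp [hm, Finsupp.single_apply]
  intro hmem
  have h0 : (coeff m)
      ((X 0 ^ 2 + X 1 ^ 2 * (X 1 - X 2 ^ 2) : MvPowerSeries (Fin 3) k) ^ n) = 0 :=
    span_coeff_zero p hmem m fun i => by rw [hmi i]; omega
  -- now compute the coefficient explicitly
  have hterm : ∀ j : ℕ,
      ((X 0 ^ 2) ^ j * ((X 1 ^ 2 * (X 1 - X 2 ^ 2)) ^ (n - j)) *
        ((n.choose j : ℕ) : MvPowerSeries (Fin 3) k))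
      = ∑ i ∈ Finset.range (n - j + 1),
          (MvPowerSeries.C : k →+* MvPowerSeries (Fin 3) k)
            ((-1) ^ (i + (n - j)) * ((n - j).choose i : k) * ((n.choose j : ℕ) : k)) *
          (X 0 ^ (2 * j) * X 1 ^ (2 * (n - j) + i) * X 2 ^ (2 * ((n - j) - i))) := by
    intro j
    rw [mul_pow, sub_pow, Finset.mul_sum, Finset.mul_sum, Finset.sum_mul]
    refine Finset.sum_congr rfl fun i hi => ?_
    simp only [map_mul, map_pow, map_neg, map_one, map_natCast]
    ring
  have hkey : (coeff m)
      ((X 0 ^ 2 + X 1 ^ 2 * (X 1 - X 2 ^ 2) : MvPowerSeries (Fin 3) k) ^ n)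
      = (-1) ^ q * (n.choose q : k) := by
    rw [add_pow, map_sum]
    rw [Finset.sum_eq_single q]
    · rw [hterm, map_sum]
      rw [Finset.sum_eq_single 0]
      · rw [coeff_C_mul, coeff_X3, if_pos, mul_one]
        · have h1 : n - q = q := by omega
          simp [h1, Nat.choose_zero_right]
        · have h1 : n - q = q := by omega
          rw [hm]
          congr 1 <;> [congr 1; skip] <;> congr 1 <;> omega
      · intro i hi hi0
        rw [coeff_C_mul, coeff_X3, if_neg, mul_zero]
        intro h
        have h2 := DFunLike.congr_fun h (2 : Fin 3)
        have h1 := DFunLike.congr_fun h (1 : Fin 3)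
        simp [hm, Finsupp.single_apply] at h1 h2
        omega
      · intro h
        exfalso
        exact h (Finset.mem_range.mpr (by omega))
    · intro j hj hjq
      rw [hterm, map_sum]
      refine Finset.sum_eq_zero fun i hi => ?_
      rw [coeff_C_mul, coeff_X3, if_neg, mul_zero]
      intro h
      have h0' := DFunLike.congr_fun h (0 : Fin 3)
      simp [hm, Finsupp.single_apply] at h0'
      omega
    · intro h
      exfalso
      exact h (Finset.mem_range.mpr (by omega))
  rw [hkey] at h0
  have hC : ¬ (p ∣ n.choose q) := by
    intro hdvd
    have hle : q ≤ n := by omega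
    have : p ∣ n.factorial := by
      have := Nat.choose_mul_factorial_mul_factorial hle
      exact this ▸ (hdvd.mul_right _).mul_right _
    rw [hp.dvd_factorial] at this
    omega
  have : ((n.choose q : ℕ) : k) ≠ 0 := by
    rwa [Ne, CharP.cast_eq_zero_iff k p]
  apply this
  rcases mul_eq_zero.mp h0 with h | h
  · exact absurd h (by simp)
  · exact h
end

section
/- Let p be an odd prime and k a field of characteristic p. Then (x² + y(y − z²)²)^{p−1} does not lie in the ideal (x^p, y^p, z^p) of the formal power series ring k[[x,y,z]]. -/
open MvPowerSeries

private lemma trip3 (a b c a' b' c' : ℕ) :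
    (Finsupp.single (0:Fin 3) a + Finsupp.single 1 b + Finsupp.single 2 c =
      Finsupp.single 0 a' + Finsupp.single 1 b' + Finsupp.single 2 c') ↔
    (a = a' ∧ b = b' ∧ c = c') := by
  constructor
  · intro h
    refine ⟨?_, ?_, ?_⟩
    · have := DFunLike.congr_fun h 0; simpa [Finsupp.single_apply] using this
    · have := DFunLike.congr_fun h 1; simpa [Finsupp.single_apply] using this
    · have := DFunLike.congr_fun h 2; simpa [Finsupp.single_apply] using this
  · rintro ⟨rfl, rfl, rfl⟩; rfl

open Finset in
private lemma expand3 {k : Type*} [Field k] (n : ℕ) :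
    ((MvPolynomial.X 0 ^ 2 + MvPolynomial.X 1 * (MvPolynomial.X 1 - MvPolynomial.X 2 ^ 2) ^ 2 : MvPolynomial (Fin 3) k) ^ n) =
      ∑ i ∈ range (n+1), ∑ j ∈ range (2*(n-i)+1),
        MvPolynomial.C ((-1 : k)^(j + 2*(n-i)) * ((n.choose i) * ((2*(n-i)).choose j) : ℕ)) *
          (MvPolynomial.X 0 ^ (2*i) * MvPolynomial.X 1 ^ ((n-i)+j) * MvPolynomial.X 2 ^ (2*(2*(n-i)-j))) := by
  rw [add_pow]
  refine sum_congr rfl fun i hi => ?_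
  rw [mul_pow, ← pow_mul, ← pow_mul, sub_pow, Finset.mul_sum, Finset.mul_sum, Finset.sum_mul]
  refine sum_congr rfl fun j hj => ?_
  simp only [map_mul, map_pow, map_neg, map_one, map_natCast, Nat.cast_mul]
  ring

open Finset in
private lemma coeff_key {k : Type*} [Field k] (m : ℕ) :
    MvPolynomial.coeff
      (Finsupp.single 0 (2*m) + Finsupp.single 1 (2*m) + Finsupp.single 2 (2*m))
      ((MvPolynomial.X 0 ^ 2 + MvPolynomial.X 1 * (MvPolynomial.X 1 - MvPolynomial.X 2 ^ 2) ^ 2 : MvPolynomial (Fin 3) k) ^ (2*m))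
      = (-1 : k)^m * (((2*m).choose m : k) * ((2*m).choose m : k)) := by
  rw [expand3]
  rw [MvPolynomial.coeff_sum]
  have hterm : ∀ i j : ℕ,
      MvPolynomial.coeff
        (Finsupp.single (0 : Fin 3) (2*m) + Finsupp.single 1 (2*m) + Finsupp.single 2 (2*m))
        (MvPolynomial.C ((-1 : k)^(j + 2*(2*m-i)) * ((2*m).choose i * ((2*(2*m-i)).choose j) : ℕ)) *
          (MvPolynomial.X 0 ^ (2*i) * MvPolynomial.X 1 ^ ((2*m-i)+j) * MvPolynomial.X 2 ^ (2*(2*(2*m-i)-j)))) =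
      if 2*i = 2*m ∧ (2*m-i)+j = 2*m ∧ 2*(2*(2*m-i)-j) = 2*m then
        ((-1 : k)^(j + 2*(2*m-i)) * ((2*m).choose i * ((2*(2*m-i)).choose j) : ℕ)) else 0 := by
    intro i j
    rw [MvPolynomial.coeff_C_mul, MvPolynomial.X_pow_eq_monomial, MvPolynomial.X_pow_eq_monomial, MvPolynomial.X_pow_eq_monomial,
      MvPolynomial.monomial_mul, MvPolynomial.monomial_mul, MvPolynomial.coeff_monomial, mul_ite, mul_one, mul_zero]
    exact if_congr (trip3 _ _ _ _ _ _) (by ring) rfl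
  rw [Finset.sum_eq_single_of_mem m (by simp only [Finset.mem_range]; omega)]
  · rw [MvPolynomial.coeff_sum,
      Finset.sum_eq_single_of_mem m (by simp only [Finset.mem_range]; omega)]
    · rw [hterm m m]
      rw [if_pos (by omega)]
      have h : 2*m - m = m := by omega
      rw [h, pow_add, pow_mul, neg_one_sq, one_pow, mul_one]
      push_cast
      ring
    · intro j hj hjm
      rw [hterm m j]
      rw [if_neg (by omega)]
  · intro i hi him
    rw [MvPolynomial.coeff_sum]
    refine Finset.sum_eq_zero fun j hj => ?_
    rw [hterm i j]
    rw [if_neg (by omega)]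

private lemma coe_sub3 {k : Type*} [Field k] (φ ψ : MvPolynomial (Fin 3) k) :
    ((φ - ψ : MvPolynomial (Fin 3) k) : MvPowerSeries (Fin 3) k) = ↑φ - ↑ψ :=
  map_sub MvPolynomial.coeToMvPowerSeries.ringHom φ ψ

theorem stmt_4 (p : ℕ) (hp : p.Prime) (hodd : Odd p)
    {k : Type*} [Field k] [CharP k p] :
    ((X 0 ^ 2 + X 1 * (X 1 - X 2 ^ 2) ^ 2 : MvPowerSeries (Fin 3) k) ^ (p - 1))
      ∉ Ideal.span ({X 0 ^ p, X 1 ^ p, X 2 ^ p} : Set (MvPowerSeries (Fin 3) k)) := by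
  intro hmem
  obtain ⟨m, hm⟩ := hodd
  have hp3 : 3 ≤ p := by have := hp.two_le; omega
  have hn : p - 1 = 2*m := by omega
  -- the distinguished exponent
  set d : Fin 3 →₀ ℕ :=
    Finsupp.single 0 (2*m) + Finsupp.single 1 (2*m) + Finsupp.single 2 (2*m) with hd
  have hdlt : ∀ i : Fin 3, d i < p := by
    intro i
    fin_cases i <;> simp [hd, Finsupp.single_apply] <;> omega
  -- coefficients of multiples of X i ^ p vanish at d
  have hzero : ∀ (i : Fin 3) (g : MvPowerSeries (Fin 3) k),
      MvPowerSeries.coeff d (g * X i ^ p) = 0 := by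
    intro i g
    rw [MvPowerSeries.X_pow_eq, MvPowerSeries.coeff_mul_monomial, if_neg]
    intro hle
    have h2 := (Finsupp.le_iff _ _).mp hle i
      (by simp [Finsupp.mem_support_iff, hp.ne_zero])
    rw [Finsupp.single_eq_same] at h2
    exact absurd (h2.trans_lt (hdlt i)) (lt_irrefl p)
  -- decompose the membership
  rw [Ideal.mem_span_insert] at hmem
  obtain ⟨a, z, hz, hF⟩ := hmem
  rw [Ideal.mem_span_insert] at hz
  obtain ⟨b, w, hw, hzeq⟩ := hz
  rw [Ideal.mem_span_singleton] at hw
  obtain ⟨c, hc⟩ := hw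
  have hcoeff0 : MvPowerSeries.coeff d
      (((X 0 : MvPowerSeries (Fin 3) k) ^ 2 + X 1 * (X 1 - X 2 ^ 2) ^ 2) ^ (p - 1)) = 0 := by
    rw [hF, hzeq, hc, map_add, map_add, mul_comm (X 2 ^ p) c,
      hzero 0, hzero 1, hzero 2]
    simp
  -- identify the power series with a polynomial
  have htrans : MvPowerSeries.coeff d
      (((X 0 : MvPowerSeries (Fin 3) k) ^ 2 + X 1 * (X 1 - X 2 ^ 2) ^ 2) ^ (p - 1)) =
      MvPolynomial.coeff d
        ((MvPolynomial.X 0 ^ 2 +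
          MvPolynomial.X 1 * (MvPolynomial.X 1 - MvPolynomial.X 2 ^ 2) ^ 2 :
            MvPolynomial (Fin 3) k) ^ (p - 1)) := by
    rw [← MvPolynomial.coeff_coe]
    congr 1
    simp only [MvPolynomial.coe_pow, MvPolynomial.coe_add, MvPolynomial.coe_mul, coe_sub3,
      MvPolynomial.coe_X]
  have hval : ((-1 : k)^m * (((2*m).choose m : k) * ((2*m).choose m : k))) = 0 := by
    rw [hn] at htrans hcoeff0
    rw [← coeff_key m, ← hd, ← htrans]
    exact hcoeff0
  -- derive the contradiction
  have hnd : ¬ p ∣ (2*m).choose m := by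
    intro hdvd
    have h1 : p ∣ Nat.factorial (2*m) := by
      rw [← Nat.choose_mul_factorial_mul_factorial (by omega : m ≤ 2*m)]
      exact (hdvd.mul_right _).mul_right _
    have := (Nat.Prime.dvd_factorial hp).mp h1
    omega
  rcases mul_eq_zero.mp hval with h | h
  · exact (pow_ne_zero m (neg_ne_zero.mpr (one_ne_zero))) h
  · have h0 : ((2*m).choose m : k) = 0 := mul_self_eq_zero.mp h
    rw [CharP.cast_eq_zero_iff k p] at h0
    exact hnd h0
end

section
/- Let k be a field and let f ∈ k[[x,y,z]] be a nonzero formal power series such that in_{(3,2,2)}f = x² + y³. Then ord_{(6,4,3)}f = 12 and in_{(6,4,3)}f = x² + y³ + a₁·xz² + a₂·z⁴ for some a₁, a₂ ∈ k. -/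
open MvPowerSeries

/-- The order of a multivariate power series `f` with respect to the weight vector `w`:
the minimum of `w · m` over the support of `f` (and `0` for `f = 0`, by `sInf ∅ = 0`). -/
noncomputable def wOrd {k : Type*} [Field k] (w : Fin 3 → ℕ)
    (f : MvPowerSeries (Fin 3) k) : ℕ :=
  sInf {n | ∃ m : Fin 3 →₀ ℕ, MvPowerSeries.coeff (R := k) m f ≠ 0 ∧ ∑ i, w i * m i = n}

/-- The initial term of `f` with respect to the weight vector `w`: the sum of the terms
of `f` whose exponent `m` satisfies `w · m = wOrd w f`. -/
noncomputable def wIn {k : Type*} [Field k] (w : Fin 3 → ℕ)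
    (f : MvPowerSeries (Fin 3) k) : MvPowerSeries (Fin 3) k :=
  fun m => if (∑ i, w i * m i) = wOrd w f then MvPowerSeries.coeff (R := k) m f else 0

section Aux

open Finsupp

lemma fin3_eq_iff (m n : Fin 3 →₀ ℕ) : m = n ↔ m 0 = n 0 ∧ m 1 = n 1 ∧ m 2 = n 2 := by
  constructor
  · rintro rfl; exact ⟨rfl, rfl, rfl⟩
  · rintro ⟨h0, h1, h2⟩
    ext i
    fin_cases i <;> assumption

lemma CXX_eq {k : Type*} [Field k] (a : k) :
    C (σ := Fin 3) (R := k) a * X 0 * X 2 ^ 2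
      = monomial (R := k) (single (0 : Fin 3) 1 + single 2 2) a := by
  rw [X_def, X_pow_eq, ← monomial_zero_eq_C_apply, monomial_mul_monomial,
    monomial_mul_monomial]
  simp

lemma CX4_eq {k : Type*} [Field k] (a : k) :
    C (σ := Fin 3) (R := k) a * X 2 ^ 4 = monomial (R := k) (single (2 : Fin 3) 4) a := by
  rw [X_pow_eq, ← monomial_zero_eq_C_apply, monomial_mul_monomial]
  simp

end Aux

lemma arith_aux (a b c : ℕ) (h : 7 ≤ 3 * a + 2 * b + 2 * c) :
    12 ≤ 6 * a + 4 * b + 3 * c := by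
  rcases Nat.lt_or_ge c 3 with hc | hc
  · omega
  · rcases Nat.lt_or_ge c 4 with hc4 | hc4
    · rcases Nat.eq_zero_or_pos a with rfl | ha <;> omega
    · omega

theorem stmt_13 {k : Type*} [Field k] (f : MvPowerSeries (Fin 3) k) (hf : f ≠ 0)
    (h : wIn ![3,2,2] f = X 0 ^ 2 + X 1 ^ 3) :
    wOrd ![6,4,3] f = 12 ∧
      ∃ a₁ a₂ : k, wIn ![6,4,3] f
        = X 0 ^ 2 + X 1 ^ 3 + C (σ := Fin 3) (R := k) a₁ * X 0 * X 2 ^ 2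
          + C (σ := Fin 3) (R := k) a₂ * X 2 ^ 4 := by
  classical
  have hW : ∀ m : Fin 3 →₀ ℕ,
      (∑ i, (![3,2,2] : Fin 3 → ℕ) i * m i) = 3 * m 0 + 2 * m 1 + 2 * m 2 := by
    intro m; simp [Fin.sum_univ_three]
  have hV : ∀ m : Fin 3 →₀ ℕ,
      (∑ i, (![6,4,3] : Fin 3 → ℕ) i * m i) = 6 * m 0 + 4 * m 1 + 3 * m 2 := by
    intro m; simp [Fin.sum_univ_three]
  -- coefficient form of `h`
  have hc : ∀ m : Fin 3 →₀ ℕ,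
      (if 3 * m 0 + 2 * m 1 + 2 * m 2 = wOrd ![3,2,2] f then coeff (R := k) m f else 0)
        = (if m = Finsupp.single 0 2 then (1 : k) else 0)
          + (if m = Finsupp.single 1 3 then (1 : k) else 0) := by
    intro m
    have hm : coeff (R := k) m (wIn ![3,2,2] f) = coeff (R := k) m (X 0 ^ 2 + X 1 ^ 3) :=
      congrArg (coeff (R := k) m) h
    rw [map_add, coeff_X_pow, coeff_X_pow] at hm
    rw [← hm]
    rw [show coeff (R := k) m (wIn ![3,2,2] f)
      = (if (∑ i, (![3,2,2] : Fin 3 → ℕ) i * m i) = wOrd ![3,2,2] f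
          then coeff (R := k) m f else 0) from rfl, hW m]
  have e200 : 3 * (Finsupp.single (0 : Fin 3) 2) 0 + 2 * (Finsupp.single (0 : Fin 3) 2) 1
      + 2 * (Finsupp.single (0 : Fin 3) 2) 2 = 6 := by simp
  have e030 : 3 * (Finsupp.single (1 : Fin 3) 3) 0 + 2 * (Finsupp.single (1 : Fin 3) 3) 1
      + 2 * (Finsupp.single (1 : Fin 3) 3) 2 = 6 := by simp
  have hne13 : (Finsupp.single (0 : Fin 3) 2) ≠ Finsupp.single 1 3 := by
    rw [Ne, fin3_eq_iff]; simp
  have h200 := hc (Finsupp.single 0 2)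
  rw [e200, if_pos rfl, if_neg hne13, add_zero] at h200
  have hd : wOrd ![3,2,2] f = 6 := by
    by_contra hne
    rw [if_neg (fun hx => hne hx.symm)] at h200
    exact zero_ne_one h200
  rw [if_pos hd.symm] at h200
  -- h200 : coeff (R := k) (single 0 2) f = 1
  have h030 := hc (Finsupp.single 1 3)
  rw [e030, hd, if_pos rfl, if_neg (fun hx => hne13 hx.symm), if_pos rfl, zero_add] at h030
  -- h030 : coeff (R := k) (single 1 3) f = 1
  have hlow : ∀ m : Fin 3 →₀ ℕ, coeff (R := k) m f ≠ 0 → 6 ≤ 3 * m 0 + 2 * m 1 + 2 * m 2 := by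
    intro m hm
    have : wOrd ![3,2,2] f ≤ 3 * m 0 + 2 * m 1 + 2 * m 2 :=
      Nat.sInf_le ⟨m, hm, hW m⟩
    omega
  have h6 : ∀ m : Fin 3 →₀ ℕ, coeff (R := k) m f ≠ 0 → 3 * m 0 + 2 * m 1 + 2 * m 2 = 6 →
      m = Finsupp.single 0 2 ∨ m = Finsupp.single 1 3 := by
    intro m hm h6m
    by_contra hor
    push_neg at hor
    have := hc m
    rw [if_pos (by rw [hd]; exact h6m), if_neg hor.1, if_neg hor.2, add_zero] at this
    exact hm this
  have hVlow : ∀ m : Fin 3 →₀ ℕ, coeff (R := k) m f ≠ 0 → 12 ≤ 6 * m 0 + 4 * m 1 + 3 * m 2 := by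
    intro m hm
    have hl := hlow m hm
    rcases eq_or_lt_of_le hl with heq | hlt
    · rcases h6 m hm heq.symm with rfl | rfl <;> simp
    · exact arith_aux _ _ _ hlt
  have hT12 : (12 : ℕ) ∈ {n | ∃ m : Fin 3 →₀ ℕ,
      coeff (R := k) m f ≠ 0 ∧ ∑ i, (![6,4,3] : Fin 3 → ℕ) i * m i = n} := by
    refine ⟨Finsupp.single 0 2, by rw [h200]; exact one_ne_zero, ?_⟩
    rw [hV]; simp
  have he : wOrd ![6,4,3] f = 12 := by
    have hle : wOrd ![6,4,3] f ≤ 12 := Nat.sInf_le hT12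
    obtain ⟨m, hm, hmv⟩ := Nat.sInf_mem (Set.nonempty_of_mem hT12)
    have h1 := hVlow m hm
    rw [hV] at hmv
    have h2 : 12 ≤ wOrd ![6,4,3] f := h1.trans_eq hmv
    exact le_antisymm hle h2
  refine ⟨he, coeff (R := k) (Finsupp.single 0 1 + Finsupp.single 2 2) f,
    coeff (R := k) (Finsupp.single 2 4) f, ?_⟩
  funext m
  show (if (∑ i, (![6,4,3] : Fin 3 → ℕ) i * m i) = wOrd ![6,4,3] f
        then coeff (R := k) m f else 0)
    = coeff (R := k) m (X 0 ^ 2 + X 1 ^ 3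
        + C (σ := Fin 3) (R := k) (coeff (R := k) (Finsupp.single 0 1 + Finsupp.single 2 2) f) * X 0 * X 2 ^ 2
        + C (σ := Fin 3) (R := k) (coeff (R := k) (Finsupp.single 2 4) f) * X 2 ^ 4)
  rw [hV m, he, map_add, map_add, map_add, coeff_X_pow, coeff_X_pow, CXX_eq, CX4_eq,
    coeff_monomial, coeff_monomial]
  by_cases h12 : 6 * m 0 + 4 * m 1 + 3 * m 2 = 12
  · rw [if_pos h12]
    have hcases : (m 0 = 2 ∧ m 1 = 0 ∧ m 2 = 0) ∨ (m 0 = 0 ∧ m 1 = 3 ∧ m 2 = 0)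
        ∨ (m 0 = 1 ∧ m 1 = 0 ∧ m 2 = 2) ∨ (m 0 = 0 ∧ m 1 = 0 ∧ m 2 = 4) := by omega
    rcases hcases with hm | hm | hm | hm
    · have hmeq : m = Finsupp.single 0 2 := by rw [fin3_eq_iff]; simp [hm]
      subst hmeq
      rw [if_pos rfl, if_neg (by rw [fin3_eq_iff]; simp),
        if_neg (by rw [fin3_eq_iff]; simp), if_neg (by rw [fin3_eq_iff]; simp), h200]
      ring
    · have hmeq : m = Finsupp.single 1 3 := by rw [fin3_eq_iff]; simp [hm]
      subst hmeq
      rw [if_neg (by rw [fin3_eq_iff]; simp), if_pos rfl,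
        if_neg (by rw [fin3_eq_iff]; simp), if_neg (by rw [fin3_eq_iff]; simp), h030]
      ring
    · have hmeq : m = Finsupp.single 0 1 + Finsupp.single 2 2 := by
        rw [fin3_eq_iff]; simp [hm]
      subst hmeq
      rw [if_neg (by rw [fin3_eq_iff]; simp), if_neg (by rw [fin3_eq_iff]; simp),
        if_pos rfl, if_neg (by rw [fin3_eq_iff]; simp)]
      ring
    · have hmeq : m = Finsupp.single 2 4 := by rw [fin3_eq_iff]; simp [hm]
      subst hmeq
      rw [if_neg (by rw [fin3_eq_iff]; simp), if_neg (by rw [fin3_eq_iff]; simp),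
        if_neg (by rw [fin3_eq_iff]; simp), if_pos rfl]
      ring
  · rw [if_neg h12, if_neg, if_neg, if_neg, if_neg]
    · ring
    all_goals
      rintro rfl
      apply h12
      simp
end

section
/- Let k be a field and let f ∈ k[[x,y,z]] be a nonzero formal power series such that in_{(15,10,6)}f = x² + y³. Then ord_{(3,2,1)}f = 6 and in_{(3,2,1)}f = x² + y³ + a₁·xyz + a₂·xz³ + a₃·z⁶ + a₄·yz⁴ + a₅·y²z² for some a₁, a₂, a₃, a₄, a₅ ∈ k. -/
open MvPowerSeries

/-- Canonical exponent vector `(a,b,c)` as a finitely supported function on `Fin 3`. -/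
noncomputable def e3 (a b c : ℕ) : Fin 3 →₀ ℕ := Finsupp.equivFunOnFinite.symm ![a,b,c]

@[simp] lemma e3_apply0 (a b c : ℕ) : e3 a b c 0 = a := rfl
@[simp] lemma e3_apply1 (a b c : ℕ) : e3 a b c 1 = b := rfl
@[simp] lemma e3_apply2 (a b c : ℕ) : e3 a b c 2 = c := rfl

lemma m_eq_e3 (m : Fin 3 →₀ ℕ) : m = e3 (m 0) (m 1) (m 2) := by
  ext i; fin_cases i <;> rfl

lemma e3_inj {a b c a' b' c' : ℕ} : e3 a b c = e3 a' b' c' ↔ a = a' ∧ b = b' ∧ c = c' := by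
  constructor
  · intro h
    exact ⟨congrArg (fun g => g 0) h, congrArg (fun g => g 1) h, congrArg (fun g => g 2) h⟩
  · rintro ⟨rfl, rfl, rfl⟩; rfl

lemma single02 : (Finsupp.single (0 : Fin 3) 2) = e3 2 0 0 := by
  ext i; fin_cases i <;> simp [Finsupp.single_apply]

lemma single13 : (Finsupp.single (1 : Fin 3) 3) = e3 0 3 0 := by
  ext i; fin_cases i <;> simp [Finsupp.single_apply]

section TermLemmas
variable {k : Type*} [Field k]

lemma term1 (a : k) : C (σ := Fin 3) (R := k) a * X 0 * X 1 * X 2 = monomial (R := k) (e3 1 1 1) a := by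
  have hE : ((0 : Fin 3 →₀ ℕ) + Finsupp.single 0 1 + Finsupp.single 1 1 + Finsupp.single 2 1)
      = e3 1 1 1 := by ext i; fin_cases i <;> simp [Finsupp.single_apply]
  rw [← monomial_zero_eq_C_apply, X_def, X_def, X_def, monomial_mul_monomial,
    monomial_mul_monomial, monomial_mul_monomial, mul_one, mul_one, mul_one, hE]

lemma term2 (a : k) : C (σ := Fin 3) (R := k) a * X 0 * X 2 ^ 3 = monomial (R := k) (e3 1 0 3) a := by
  have hE : ((0 : Fin 3 →₀ ℕ) + Finsupp.single 0 1 + Finsupp.single 2 3)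
      = e3 1 0 3 := by ext i; fin_cases i <;> simp [Finsupp.single_apply]
  rw [← monomial_zero_eq_C_apply, X_def, X_pow_eq, monomial_mul_monomial,
    monomial_mul_monomial, mul_one, mul_one, hE]

lemma term3 (a : k) : C (σ := Fin 3) (R := k) a * X 2 ^ 6 = monomial (R := k) (e3 0 0 6) a := by
  have hE : ((0 : Fin 3 →₀ ℕ) + Finsupp.single 2 6)
      = e3 0 0 6 := by ext i; fin_cases i <;> simp [Finsupp.single_apply]
  rw [← monomial_zero_eq_C_apply, X_pow_eq, monomial_mul_monomial, mul_one, hE]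

lemma term4 (a : k) : C (σ := Fin 3) (R := k) a * X 1 * X 2 ^ 4 = monomial (R := k) (e3 0 1 4) a := by
  have hE : ((0 : Fin 3 →₀ ℕ) + Finsupp.single 1 1 + Finsupp.single 2 4)
      = e3 0 1 4 := by ext i; fin_cases i <;> simp [Finsupp.single_apply]
  rw [← monomial_zero_eq_C_apply, X_def, X_pow_eq, monomial_mul_monomial,
    monomial_mul_monomial, mul_one, mul_one, hE]

lemma term5 (a : k) : C (σ := Fin 3) (R := k) a * X 1 ^ 2 * X 2 ^ 2 = monomial (R := k) (e3 0 2 2) a := by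
  have hE : ((0 : Fin 3 →₀ ℕ) + Finsupp.single 1 2 + Finsupp.single 2 2)
      = e3 0 2 2 := by ext i; fin_cases i <;> simp [Finsupp.single_apply]
  rw [← monomial_zero_eq_C_apply, X_pow_eq, X_pow_eq, monomial_mul_monomial,
    monomial_mul_monomial, mul_one, mul_one, hE]

end TermLemmas

lemma enum6 {a b c : ℕ} (h : 3 * a + 2 * b + c = 6) :
    (a = 2 ∧ b = 0 ∧ c = 0) ∨ (a = 1 ∧ b = 1 ∧ c = 1) ∨ (a = 1 ∧ b = 0 ∧ c = 3)
      ∨ (a = 0 ∧ b = 3 ∧ c = 0) ∨ (a = 0 ∧ b = 2 ∧ c = 2) ∨ (a = 0 ∧ b = 1 ∧ c = 4)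
      ∨ (a = 0 ∧ b = 0 ∧ c = 6) := by
  have ha : a ≤ 2 := by omega
  have hb : b ≤ 3 := by omega
  interval_cases a <;> interval_cases b <;> omega

theorem stmt_16 {k : Type*} [Field k] (f : MvPowerSeries (Fin 3) k) (hf : f ≠ 0)
    (h : wIn ![15,10,6] f = X 0 ^ 2 + X 1 ^ 3) :
    wOrd ![3,2,1] f = 6 ∧
      ∃ a₁ a₂ a₃ a₄ a₅ : k, wIn ![3,2,1] f
        = X 0 ^ 2 + X 1 ^ 3 + C (σ := Fin 3) (R := k) a₁ * X 0 * X 1 * X 2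
          + C (σ := Fin 3) (R := k) a₂ * X 0 * X 2 ^ 3 + C (σ := Fin 3) (R := k) a₃ * X 2 ^ 6
          + C (σ := Fin 3) (R := k) a₄ * X 1 * X 2 ^ 4 + C (σ := Fin 3) (R := k) a₅ * X 1 ^ 2 * X 2 ^ 2 := by
  classical
  have hw1 : ∀ m : Fin 3 →₀ ℕ, ∑ i, (![15,10,6] : Fin 3 → ℕ) i * m i
      = 15 * m 0 + 10 * m 1 + 6 * m 2 := by
    have h2 : (![15,10,6] : Fin 3 → ℕ) 2 = 6 := rfl
    intro m; rw [Fin.sum_univ_three]; norm_num [h2]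
  have hw2 : ∀ m : Fin 3 →₀ ℕ, ∑ i, (![3,2,1] : Fin 3 → ℕ) i * m i
      = 3 * m 0 + 2 * m 1 + m 2 := by
    have h2 : (![3,2,1] : Fin 3 → ℕ) 2 = 1 := rfl
    intro m; rw [Fin.sum_univ_three]; norm_num [h2]
  -- coefficientwise version of h
  have hc : ∀ m : Fin 3 →₀ ℕ,
      (if 15 * m 0 + 10 * m 1 + 6 * m 2 = wOrd ![15,10,6] f then MvPowerSeries.coeff (R := k) m f else 0)
        = (if m = e3 2 0 0 then 1 else 0) + (if m = e3 0 3 0 then 1 else 0) := by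
    intro m
    have h1 : wIn ![15,10,6] f m = (X 0 ^ 2 + X 1 ^ 3 : MvPowerSeries (Fin 3) k) m :=
      congrFun h m
    have h2 : wIn ![15,10,6] f m
        = if 15 * m 0 + 10 * m 1 + 6 * m 2 = wOrd ![15,10,6] f
            then MvPowerSeries.coeff (R := k) m f else 0 := by
      simp only [wIn]; rw [hw1]
    have h3 : MvPowerSeries.coeff (R := k) m (X 0 ^ 2 + X 1 ^ 3 : MvPowerSeries (Fin 3) k)
        = (if m = e3 2 0 0 then 1 else 0) + (if m = e3 0 3 0 then 1 else 0) := by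
      rw [map_add, X_pow_eq, X_pow_eq, single02, single13, coeff_monomial, coeff_monomial]
    rw [← h2, h1]
    exact h3
  -- the (15,10,6)-order of f is 30
  have hne1 : ¬ (e3 2 0 0 = e3 0 3 0) := by rw [e3_inj]; omega
  have hne2 : ¬ (e3 0 0 5 = e3 2 0 0) := by rw [e3_inj]; omega
  have hne3 : ¬ (e3 0 0 5 = e3 0 3 0) := by rw [e3_inj]; omega
  have h30 : wOrd ![15,10,6] f = 30 := by
    have h0 := hc (e3 2 0 0)
    rw [if_pos rfl, if_neg hne1] at h0
    simp only [e3_apply0, e3_apply1, e3_apply2] at h0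
    norm_num at h0
    by_cases hcase : 30 = wOrd ![15,10,6] f
    · exact hcase.symm
    · rw [if_neg hcase] at h0; exact absurd h0 (by norm_num)
  -- coefficients below weight 30 vanish
  have hlow : ∀ m : Fin 3 →₀ ℕ, 15 * m 0 + 10 * m 1 + 6 * m 2 < 30 →
      MvPowerSeries.coeff (R := k) m f = 0 := by
    intro m hm
    by_contra hne
    have hmem : (15 * m 0 + 10 * m 1 + 6 * m 2) ∈
        {n | ∃ m' : Fin 3 →₀ ℕ, MvPowerSeries.coeff (R := k) m' f ≠ 0 ∧
          ∑ i, (![15,10,6] : Fin 3 → ℕ) i * m' i = n} := ⟨m, hne, hw1 m⟩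
    have hle : wOrd ![15,10,6] f ≤ 15 * m 0 + 10 * m 1 + 6 * m 2 := Nat.sInf_le hmem
    omega
  -- coefficients at weight exactly 30
  have heq30 : ∀ m : Fin 3 →₀ ℕ, 15 * m 0 + 10 * m 1 + 6 * m 2 = 30 →
      MvPowerSeries.coeff (R := k) m f
        = (if m = e3 2 0 0 then 1 else 0) + (if m = e3 0 3 0 then 1 else 0) := by
    intro m hm
    have h0 := hc m
    rw [hm, if_pos h30.symm] at h0
    exact h0
  have hA : MvPowerSeries.coeff (R := k) (e3 2 0 0) f = 1 := by
    have h0 := heq30 (e3 2 0 0) (by norm_num)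
    rw [if_pos rfl, if_neg hne1] at h0
    simpa using h0
  have hB : MvPowerSeries.coeff (R := k) (e3 0 3 0) f = 1 := by
    have h0 := heq30 (e3 0 3 0) (by norm_num)
    rw [if_neg (fun hh => hne1 hh.symm), if_pos rfl] at h0
    simpa using h0
  -- the (3,2,1)-order of f is 6
  have hmem6 : (6 : ℕ) ∈ {n | ∃ m : Fin 3 →₀ ℕ, MvPowerSeries.coeff (R := k) m f ≠ 0 ∧
      ∑ i, (![3,2,1] : Fin 3 → ℕ) i * m i = n} :=
    ⟨e3 2 0 0, by rw [hA]; exact one_ne_zero, by rw [hw2]; simp⟩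
  have hlb : ∀ n ∈ {n | ∃ m : Fin 3 →₀ ℕ, MvPowerSeries.coeff (R := k) m f ≠ 0 ∧
      ∑ i, (![3,2,1] : Fin 3 → ℕ) i * m i = n}, 6 ≤ n := by
    rintro n ⟨m, hm, hn⟩
    rw [hw2] at hn
    by_contra hlt
    push_neg at hlt
    have hW : 15 * m 0 + 10 * m 1 + 6 * m 2 < 30 ∨
        (m 0 = 0 ∧ m 1 = 0 ∧ m 2 = 5 ∧ 15 * m 0 + 10 * m 1 + 6 * m 2 = 30) := by omega
    rcases hW with hW | ⟨h0', h1', h2', hW⟩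
    · exact hm (hlow m hW)
    · have h0 := heq30 m hW
      have hmE : m = e3 0 0 5 := by
        have := m_eq_e3 m; rw [h0', h1', h2'] at this; exact this
      rw [hmE, if_neg hne2, if_neg hne3] at h0
      rw [hmE] at hm
      exact hm (by simpa using h0)
  have hord6 : wOrd ![3,2,1] f = 6 :=
    le_antisymm (Nat.sInf_le hmem6) (le_csInf ⟨6, hmem6⟩ hlb)
  refine ⟨hord6, MvPowerSeries.coeff (R := k) (e3 1 1 1) f, MvPowerSeries.coeff (R := k) (e3 1 0 3) f,
    MvPowerSeries.coeff (R := k) (e3 0 0 6) f, MvPowerSeries.coeff (R := k) (e3 0 1 4) f,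
    MvPowerSeries.coeff (R := k) (e3 0 2 2) f, ?_⟩
  apply MvPowerSeries.ext
  intro m
  obtain ⟨a, b, c, rfl⟩ : ∃ a b c, m = e3 a b c := ⟨m 0, m 1, m 2, m_eq_e3 m⟩
  have hL : MvPowerSeries.coeff (R := k) (e3 a b c) (wIn ![3,2,1] f)
      = if 3 * a + 2 * b + c = 6 then MvPowerSeries.coeff (R := k) (e3 a b c) f else 0 := by
    show wIn ![3,2,1] f (e3 a b c) = _
    simp only [wIn]
    rw [hw2, hord6]
    split_ifs with h1 h2 h2
    · rfl
    · exact absurd h1 h2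
    · exact absurd h2 h1
    · rfl
  rw [hL, term1, term2, term3, term4, term5, X_pow_eq, X_pow_eq, single02, single13]
  simp only [map_add, coeff_monomial, e3_inj]
  by_cases h6 : 3 * a + 2 * b + c = 6
  · rw [if_pos h6]
    rcases enum6 h6 with ⟨rfl, rfl, rfl⟩ | ⟨rfl, rfl, rfl⟩ | ⟨rfl, rfl, rfl⟩ | ⟨rfl, rfl, rfl⟩ |
      ⟨rfl, rfl, rfl⟩ | ⟨rfl, rfl, rfl⟩ | ⟨rfl, rfl, rfl⟩ <;>
      simp [hA, hB]
  · rw [if_neg h6]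
    symm
    rw [if_neg (by omega), if_neg (by omega), if_neg (by omega), if_neg (by omega),
      if_neg (by omega), if_neg (by omega), if_neg (by omega)]
    norm_num
end
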